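/- Let P be a finite set of points in 1D, each colored red or blue, and let k ≤ |P|. Let K_r be the set of integers k_r such that there exists an interval containing exactly k points of P and exactly k_r red points. Then K_r is a contiguous range of integers: if a, b ∈ K_r and a ≤ c ≤ b, then c ∈ K_r. -/

import Mathlib

/-- number of red points among positions `i, ..., i+k-1` of the list `l`. -/
def winCount (color : ℝ → Bool) (l : List ℝ) (k i : ℕ) : ℕ :=
  ((Finset.Ico i (i+k)).filter (fun j => color (l.getD j 0) = true)).card

lemma winCount_lip (color : ℝ → Bool) (l : List ℝ) (k i : ℕ) :
    winCount color l k i ≤ winCount color l k (i+1) + 1 ∧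
    winCount color l k (i+1) ≤ winCount color l k i + 1 := by
  set p : ℕ → Prop := fun j => color (l.getD j 0) = true with hp
  have e1 : Finset.Ico i (i+k+1) = insert (i+k) (Finset.Ico i (i+k)) := by
    ext x; simp only [Finset.mem_Ico, Finset.mem_insert]; omega
  have e2 : Finset.Ico i (i+k+1) = insert i (Finset.Ico (i+1) (i+1+k)) := by
    ext x; simp only [Finset.mem_Ico, Finset.mem_insert]; omega
  have c1 : ((Finset.Ico i (i+k+1)).filter (fun j => p j)).card
      = winCount color l k i + (if p (i+k) then 1 else 0) := by
    rw [e1, Finset.filter_insert]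
    split
    · rw [Finset.card_insert_of_notMem (by simp [Finset.mem_filter])]
      simp [winCount, hp]
    · simp [winCount, hp]
  have c2 : ((Finset.Ico i (i+k+1)).filter (fun j => p j)).card
      = winCount color l k (i+1) + (if p i then 1 else 0) := by
    rw [e2, Finset.filter_insert]
    split
    · rw [Finset.card_insert_of_notMem (by simp [Finset.mem_filter])]
      simp [winCount, hp]
    · simp [winCount, hp]
  constructor <;> (rw [c2] at c1; split at c1 <;> split at c1 <;> omega)

lemma walkIVT (f : ℕ → ℕ)
    (hf : ∀ i, f i ≤ f (i+1) + 1 ∧ f (i+1) ≤ f i + 1) :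
    ∀ d i c, ((f i ≤ c ∧ c ≤ f (i+d)) ∨ (f (i+d) ≤ c ∧ c ≤ f i)) →
      ∃ j ≤ d, f (i+j) = c := by
  intro d
  induction d with
  | zero => intro i c h; refine ⟨0, le_refl 0, by simp only [Nat.add_zero] at h ⊢; omega⟩
  | succ d ih =>
    intro i c h
    by_cases hc : f i = c
    · exact ⟨0, by omega, hc⟩
    · have h1 := hf i
      have h2 : (f (i+1) ≤ c ∧ c ≤ f (i+1+d)) ∨ (f (i+1+d) ≤ c ∧ c ≤ f (i+1)) := by
        have e : i + 1 + d = i + (d+1) := by omega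
        rw [e]; omega
      obtain ⟨j, hj, hfj⟩ := ih (i+1) c h2
      exact ⟨j+1, by omega, by rw [show i+(j+1) = i+1+j by omega]; exact hfj⟩

section Geometry

variable (P : Finset ℝ) (color : ℝ → Bool) (l : List ℝ)

lemma getD_strict (hl : l.Pairwise (· < ·)) {j j' : ℕ} (h : j < j') (h' : j' < l.length) :
    l.getD j 0 < l.getD j' 0 := by
  rw [List.getD_eq_getElem l 0 (h.trans h'), List.getD_eq_getElem l 0 h']
  exact (List.Pairwise.sortedLT hl) (by exact h)

lemma getD_mono (hl : l.Pairwise (· < ·)) {j j' : ℕ} (h : j ≤ j') (h' : j' < l.length) :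
    l.getD j 0 ≤ l.getD j' 0 := by
  rcases eq_or_lt_of_le h with rfl | h
  · exact le_refl _
  · exact (getD_strict l hl h h').le

lemma getD_injOn (hl : l.Pairwise (· < ·)) {s : Finset ℕ} (hs : ∀ j ∈ s, j < l.length) :
    Set.InjOn (fun j => l.getD j 0) ↑s := by
  intro x hx y hy hxy
  rcases lt_trichotomy x y with h | h | h
  · exact absurd hxy (ne_of_lt (getD_strict l hl h (hs y hy)))
  · exact h
  · exact absurd hxy.symm (ne_of_lt (getD_strict l hl h (hs x hx)))

lemma getD_mem (hmem : ∀ x, x ∈ l ↔ x ∈ P) {j : ℕ} (h : j < l.length) :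
    l.getD j 0 ∈ P := by
  rw [List.getD_eq_getElem l 0 h]
  exact (hmem _).mp (List.getElem_mem h)

lemma winCount_realizable (hl : l.Pairwise (· < ·)) (hmem : ∀ x, x ∈ l ↔ x ∈ P)
    (k i : ℕ) (hk1 : 1 ≤ k) (hik : i + k ≤ l.length) :
    ∃ u v : ℝ, u ≤ v ∧ ((↑P : Set ℝ) ∩ Set.Icc u v).ncard = k ∧
      ({p : ℝ | p ∈ P ∧ p ∈ Set.Icc u v ∧ color p = true}).ncard = winCount color l k i := by
  classical
  set g : ℕ → ℝ := fun j => l.getD j 0 with hg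
  refine ⟨g i, g (i+k-1), getD_mono l hl (by omega) (by omega), ?_, ?_⟩
  all_goals
    have key : ∀ p : ℝ, (p ∈ P ∧ p ∈ Set.Icc (g i) (g (i+k-1)))
        ↔ ∃ j, (i ≤ j ∧ j < i + k) ∧ g j = p := by
      intro p
      constructor
      · rintro ⟨hp, hp1, hp2⟩
        obtain ⟨⟨j, hjl⟩, rfl⟩ := List.mem_iff_get.mp ((hmem p).mpr hp)
        have hgj : g j = l.get ⟨j, hjl⟩ := by
          rw [hg]; simp only [List.getD_eq_getElem l 0 hjl]; rfl
        refine ⟨j, ⟨?_, ?_⟩, hgj⟩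
        · by_contra hcon
          have h5 : g j < g i :=
            getD_strict l hl (show j < i by omega) (show i < l.length by omega)
          rw [hgj] at h5; exact absurd hp1 (not_le.mpr h5)
        · by_contra hcon
          have h5 : g (i+k-1) < g j := getD_strict l hl (show i+k-1 < j by omega) hjl
          rw [hgj] at h5; exact absurd hp2 (not_le.mpr h5)
      · rintro ⟨j, ⟨hj1, hj2⟩, rfl⟩
        exact ⟨getD_mem P l hmem (by omega),
          getD_mono l hl hj1 (by omega), getD_mono l hl (by omega) (by omega)⟩
    have inj : Set.InjOn g ↑(Finset.Ico i (i+k)) :=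
      getD_injOn l hl (fun j hj => by simp only [Finset.mem_Ico] at hj; omega)
  · have eS : ((↑P : Set ℝ) ∩ Set.Icc (g i) (g (i+k-1)))
        = ↑((Finset.Ico i (i+k)).image g) := by
      ext p
      simp only [Set.mem_inter_iff, Finset.mem_coe, Finset.coe_image, Set.mem_image,
        Finset.mem_coe, Finset.mem_Ico]
      constructor
      · rintro ⟨h1, h2⟩
        obtain ⟨j, hj, hjp⟩ := (key p).mp ⟨h1, h2⟩
        exact ⟨j, hj, hjp⟩
      · rintro ⟨j, hj, rfl⟩
        exact (key (g j)).mpr ⟨j, hj, rfl⟩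
    rw [eS, Set.ncard_coe_finset, Finset.card_image_of_injOn inj, Nat.card_Ico]
    omega
  · have eR : {p : ℝ | p ∈ P ∧ p ∈ Set.Icc (g i) (g (i+k-1)) ∧ color p = true}
        = ↑(((Finset.Ico i (i+k)).filter (fun j => color (g j) = true)).image g) := by
      ext p
      simp only [Set.mem_setOf_eq, Finset.coe_image, Set.mem_image, Finset.mem_coe,
        Finset.mem_filter, Finset.mem_Ico]
      constructor
      · rintro ⟨h1, h2, h3⟩
        obtain ⟨j, hj, rfl⟩ := (key p).mp ⟨h1, h2⟩
        exact ⟨j, ⟨hj, h3⟩, rfl⟩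
      · rintro ⟨j, ⟨hj, hcj⟩, rfl⟩
        obtain ⟨h1, h2⟩ := (key (g j)).mpr ⟨j, hj, rfl⟩
        exact ⟨h1, h2, hcj⟩
    rw [eR, Set.ncard_coe_finset,
      Finset.card_image_of_injOn (inj.mono (by exact_mod_cast Finset.filter_subset _ _))]
    rfl

lemma winCount_of_interval (hl : l.Pairwise (· < ·)) (hmem : ∀ x, x ∈ l ↔ x ∈ P)
    (k : ℕ) (hk1 : 1 ≤ k) (u v : ℝ)
    (hcard : ((↑P : Set ℝ) ∩ Set.Icc u v).ncard = k) :
    ∃ i, i + k ≤ l.length ∧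
      winCount color l k i = ({p : ℝ | p ∈ P ∧ p ∈ Set.Icc u v ∧ color p = true}).ncard := by
  classical
  set g : ℕ → ℝ := fun j => l.getD j 0 with hg
  have key : ∀ p : ℝ, (p ∈ P ∧ p ∈ Set.Icc u v)
      ↔ ∃ j, (j < l.length ∧ g j ∈ Set.Icc u v) ∧ g j = p := by
    intro p
    constructor
    · rintro ⟨hp, hpI⟩
      obtain ⟨⟨j, hjl⟩, rfl⟩ := List.mem_iff_get.mp ((hmem p).mpr hp)
      have hgj : g j = l.get ⟨j, hjl⟩ := by
        rw [hg]; simp only [List.getD_eq_getElem l 0 hjl]; rfl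
      exact ⟨j, ⟨hjl, by rw [hgj]; exact hpI⟩, hgj⟩
    · rintro ⟨j, ⟨hj1, hj2⟩, rfl⟩
      exact ⟨getD_mem P l hmem hj1, hj2⟩
  set T : Finset ℕ := (Finset.range l.length).filter (fun j => g j ∈ Set.Icc u v) with hT
  have hmemT : ∀ j, j ∈ T ↔ (j < l.length ∧ g j ∈ Set.Icc u v) := by
    intro j; rw [hT]; simp [Finset.mem_filter, Finset.mem_range]
  have hTinj : Set.InjOn g ↑T :=
    getD_injOn l hl (fun j hj => ((hmemT j).mp hj).1)
  have hTcard : T.card = k := by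
    have eS : ((↑P : Set ℝ) ∩ Set.Icc u v) = ↑(T.image g) := by
      ext p
      simp only [Set.mem_inter_iff, Finset.mem_coe, Finset.coe_image, Set.mem_image,
        Finset.mem_coe]
      constructor
      · rintro ⟨h1, h2⟩
        obtain ⟨j, hj, hjp⟩ := (key p).mp ⟨h1, h2⟩
        exact ⟨j, (hmemT j).mpr hj, hjp⟩
      · rintro ⟨j, hj, rfl⟩
        exact (key (g j)).mpr ⟨j, (hmemT j).mp hj, rfl⟩
    rw [eS, Set.ncard_coe_finset, Finset.card_image_of_injOn hTinj] at hcard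
    exact hcard
  have hTne : T.Nonempty := Finset.card_pos.mp (by omega)
  set i := T.min' hTne with hi
  set m := T.max' hTne with hm
  have him : i ≤ m := T.min'_le m (T.max'_mem hTne)
  have hmn : m < l.length := ((hmemT m).mp (T.max'_mem hTne)).1
  have hconv : ∀ j, i ≤ j → j ≤ m → j ∈ T := by
    intro j h1 h2
    have hjlen : j < l.length := lt_of_le_of_lt h2 hmn
    have imem := (hmemT i).mp (T.min'_mem hTne)
    have mmem := (hmemT m).mp (T.max'_mem hTne)
    exact (hmemT j).mpr ⟨hjlen,
      le_trans imem.2.1 (getD_mono l hl h1 hjlen),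
      le_trans (getD_mono l hl h2 hmn) mmem.2.2⟩
  have hcle : k ≤ m + 1 - i := by
    rw [← hTcard]
    calc T.card ≤ (Finset.Icc i m).card :=
          Finset.card_le_card (fun j hj => Finset.mem_Icc.mpr ⟨T.min'_le j hj, T.le_max' j hj⟩)
      _ = m + 1 - i := Nat.card_Icc i m
  have hik : i + k ≤ l.length := by omega
  have hTIco : T = Finset.Ico i (i+k) := by
    refine (Finset.eq_of_subset_of_card_le ?_ ?_).symm
    · intro j hj
      rw [Finset.mem_Ico] at hj
      exact hconv j hj.1 (by omega)
    · rw [hTcard, Nat.card_Ico]; omega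
  refine ⟨i, hik, ?_⟩
  have eR : {p : ℝ | p ∈ P ∧ p ∈ Set.Icc u v ∧ color p = true}
      = ↑((T.filter (fun j => color (g j) = true)).image g) := by
    ext p
    simp only [Set.mem_setOf_eq, Finset.coe_image, Set.mem_image, Finset.mem_coe,
      Finset.mem_filter]
    constructor
    · rintro ⟨h1, h2, h3⟩
      obtain ⟨j, hj, rfl⟩ := (key p).mp ⟨h1, h2⟩
      exact ⟨j, ⟨(hmemT j).mpr hj, h3⟩, rfl⟩
    · rintro ⟨j, ⟨hj, hcj⟩, rfl⟩
      obtain ⟨h1, h2⟩ := (key (g j)).mpr ⟨j, (hmemT j).mp hj, rfl⟩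
      exact ⟨h1, h2, hcj⟩
  rw [eR, Set.ncard_coe_finset,
    Finset.card_image_of_injOn (hTinj.mono (by exact_mod_cast Finset.filter_subset _ _)),
    winCount, ← hTIco]

end Geometry

theorem stmt6 (P : Finset ℝ) (color : ℝ → Bool) (k : ℕ) (hk : k ≤ P.card)
    (Kr : Set ℕ)
    (hKr : Kr = {r : ℕ | ∃ u v : ℝ, u ≤ v ∧
        ((↑P : Set ℝ) ∩ Set.Icc u v).ncard = k ∧
        ({p : ℝ | p ∈ P ∧ p ∈ Set.Icc u v ∧ color p = true}).ncard = r})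
    (a b c : ℕ) (ha : a ∈ Kr) (hb : b ∈ Kr) (hac : a ≤ c) (hcb : c ≤ b) :
    c ∈ Kr := by
  rcases eq_or_lt_of_le hac with rfl | hac'
  · exact ha
  rcases eq_or_lt_of_le hcb with rfl | hcb'
  · exact hb
  subst hKr
  set l : List ℝ := P.sort (· ≤ ·) with hldef
  have hl : l.Pairwise (· < ·) := P.sortedLT_sort.pairwise
  have hmem : ∀ x, x ∈ l ↔ x ∈ P := fun x => P.mem_sort _
  obtain ⟨u₀, v₀, huv₀, hc₀, hr₀⟩ := ha
  obtain ⟨u₁, v₁, huv₁, hc₁, hr₁⟩ := hb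
  -- k ≥ 1 since b ≥ 1 and b ≤ k
  have hbk : b ≤ k := by
    rw [← hc₁, ← hr₁]
    refine Set.ncard_le_ncard ?_ (Set.Finite.inter_of_left P.finite_toSet _)
    rintro p ⟨h1, h2, _⟩
    exact ⟨h1, h2⟩
  have hk1 : 1 ≤ k := by omega
  obtain ⟨i₀, hi₀, hw₀⟩ := winCount_of_interval P color l hl hmem k hk1 u₀ v₀ hc₀
  obtain ⟨i₁, hi₁, hw₁⟩ := winCount_of_interval P color l hl hmem k hk1 u₁ v₁ hc₁
  rw [hr₀] at hw₀
  rw [hr₁] at hw₁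
  have hf := winCount_lip color l k
  -- find window with value c between i₀ and i₁
  have hmain : ∃ i, i + k ≤ l.length ∧ winCount color l k i = c := by
    rcases le_total i₀ i₁ with hle | hle
    · obtain ⟨j, hj, hfj⟩ := walkIVT (winCount color l k) hf (i₁ - i₀) i₀ c
        (Or.inl ⟨by omega, by rw [show i₀ + (i₁ - i₀) = i₁ by omega, hw₁]; omega⟩)
      exact ⟨i₀ + j, by omega, hfj⟩
    · obtain ⟨j, hj, hfj⟩ := walkIVT (winCount color l k) hf (i₀ - i₁) i₁ c
        (Or.inr ⟨by rw [show i₁ + (i₀ - i₁) = i₀ by omega, hw₀]; omega, by omega⟩)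
      exact ⟨i₁ + j, by omega, hfj⟩
  obtain ⟨i, hik, hwc⟩ := hmain
  obtain ⟨u, v, huv, hcard, hred⟩ := winCount_realizable P color l hl hmem k i hk1 hik
  exact ⟨u, v, huv, hcard, by rw [hred, hwc]⟩
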